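/- Let β > 1, h : [0,1) → [0,1] Lipschitz, ψ : ℕ → ℝ^+, and for n ≥ 1 let Ẽ_n = ⋃_{ε_n ∈ Λ_β^n} {x ∈ I_{n,β}(ε_n) : |T_β^n x − h(x)| < ψ(n)}. Then for any full word ε_k ∈ Λ_β^k and any M > N ≥ k, one has ∑_{n,m=N}^M λ(I_{k,β}(ε_k) ∩ Ẽ_m ∩ Ẽ_n) ≤ C |I_{k,β}(ε_k)| ((∑_{n=N}^M ψ(n))² + ∑_{n=N}^M ψ(n)) for a constant C independent of ε_k, N, M. -/

import Mathlib

open MeasureTheory Set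
open scoped Classical Topology BigOperators ENNReal

/-- The β-transformation `x ↦ βx (mod 1)` on `[0,1)`. -/
noncomputable def Tb (β : ℝ) : ℝ → ℝ := fun x => Int.fract (β * x)

/-- The k-th digit (0-indexed) of the β-expansion of x. -/
noncomputable def bdigit (β : ℝ) (k : ℕ) (x : ℝ) : ℤ := ⌊β * (Tb β)^[k] x⌋

/-- The cylinder of points of `[0,1)` whose β-expansion starts with ε. -/
def cylinder (β : ℝ) (n : ℕ) (ε : Fin n → ℤ) : Set ℝ :=
  {x | x ∈ Set.Ico (0:ℝ) 1 ∧ ∀ k : Fin n, bdigit β k x = ε k}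

/-- ε is β-admissible iff its cylinder is nonempty. -/
def BAdmissible (β : ℝ) (n : ℕ) (ε : Fin n → ℤ) : Prop :=
  (cylinder β n ε).Nonempty

/-- ε is full iff it is admissible and its cylinder has maximal length β^(-n). -/
def IsFull (β : ℝ) (n : ℕ) (ε : Fin n → ℤ) : Prop :=
  BAdmissible β n ε ∧ volume (cylinder β n ε) = ENNReal.ofReal (β ^ (-(n:ℤ)))

/-- Ẽ_n: union over full words of level n of {x ∈ I_{n,β}(ε) : |T_β^n x − h(x)| < ψ(n)}. -/
def Et (β : ℝ) (ψ : ℕ → ℝ) (h : ℝ → ℝ) (n : ℕ) : Set ℝ :=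
  ⋃ ε : Fin n → ℤ, ⋃ _ : IsFull β n ε, {x ∈ cylinder β n ε | |(Tb β)^[n] x - h x| < ψ n}

lemma Tb_mem_Ico (β x : ℝ) : Tb β x ∈ Set.Ico (0:ℝ) 1 :=
  ⟨Int.fract_nonneg _, Int.fract_lt_one _⟩

lemma Tb_iter_mem (β : ℝ) {x : ℝ} (hx : x ∈ Set.Ico (0:ℝ) 1) (n : ℕ) :
    (Tb β)^[n] x ∈ Set.Ico (0:ℝ) 1 := by
  cases n with
  | zero => exact hx
  | succ n => rw [Function.iterate_succ_apply']; exact Tb_mem_Ico _ _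

lemma Tb_iter_eq (β x : ℝ) (n : ℕ) :
    (Tb β)^[n] x = β ^ n * x - ∑ i ∈ Finset.range n, (bdigit β i x : ℝ) * β ^ (n - 1 - i) := by
  induction n with
  | zero => simp
  | succ n ih =>
    rw [Function.iterate_succ_apply']
    have h1 : Tb β ((Tb β)^[n] x) = β * (Tb β)^[n] x - (bdigit β n x : ℝ) := by
      show Int.fract (β * (Tb β)^[n] x) = _
      rw [← Int.self_sub_floor]
      rfl
    rw [h1, ih, Finset.sum_range_succ]
    have h2 : ∀ i ∈ Finset.range n,
        (bdigit β i x : ℝ) * β ^ (n + 1 - 1 - i) = β * ((bdigit β i x : ℝ) * β ^ (n - 1 - i)) := by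
      intro i hi
      rw [Finset.mem_range] at hi
      have : n + 1 - 1 - i = (n - 1 - i) + 1 := by omega
      rw [this, pow_succ]; ring
    rw [Finset.sum_congr rfl h2]
    have : n + 1 - 1 - n = 0 := by omega
    rw [this]
    rw [← Finset.mul_sum]
    ring

lemma Tb_iter_sub (β x y : ℝ) (n : ℕ) (hd : ∀ i : ℕ, i < n → bdigit β i x = bdigit β i y) :
    (Tb β)^[n] x - (Tb β)^[n] y = β ^ n * (x - y) := by
  rw [Tb_iter_eq, Tb_iter_eq]
  have : ∑ i ∈ Finset.range n, (bdigit β i x : ℝ) * β ^ (n - 1 - i)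
      = ∑ i ∈ Finset.range n, (bdigit β i y : ℝ) * β ^ (n - 1 - i) := by
    refine Finset.sum_congr rfl fun i hi => ?_
    rw [hd i (Finset.mem_range.mp hi)]
  rw [this]; ring

lemma cylinder_subset_Ico (β : ℝ) (n : ℕ) (ε : Fin n → ℤ) :
    cylinder β n ε ⊆ Set.Ico (0:ℝ) 1 := fun _ hx => hx.1

lemma mem_cylinder_digits {β : ℝ} {n : ℕ} {ε : Fin n → ℤ} {x : ℝ} (hx : x ∈ cylinder β n ε)
    (i : ℕ) (hi : i < n) : bdigit β i x = ε ⟨i, hi⟩ := hx.2 ⟨i, hi⟩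

lemma cylinder_iter_sub {β : ℝ} {n : ℕ} {ε : Fin n → ℤ} {x y : ℝ}
    (hx : x ∈ cylinder β n ε) (hy : y ∈ cylinder β n ε) :
    (Tb β)^[n] x - (Tb β)^[n] y = β ^ n * (x - y) :=
  Tb_iter_sub β x y n fun i hi => by
    rw [mem_cylinder_digits hx i hi, mem_cylinder_digits hy i hi]

lemma cylinder_diam {β : ℝ} (hβ : 1 < β) {n : ℕ} {ε : Fin n → ℤ} {x y : ℝ}
    (hx : x ∈ cylinder β n ε) (hy : y ∈ cylinder β n ε) : |x - y| ≤ (β ^ n)⁻¹ := by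
  have hpow : (0:ℝ) < β ^ n := pow_pos (lt_trans one_pos hβ) n
  have h1 := cylinder_iter_sub hx hy
  have hx1 := Tb_iter_mem β hx.1 n
  have hy1 := Tb_iter_mem β hy.1 n
  have h2 : |(Tb β)^[n] x - (Tb β)^[n] y| ≤ 1 := by
    rw [abs_le]; constructor <;> [linarith [hx1.1, hy1.2.le]; linarith [hy1.1, hx1.2.le]]
  rw [h1, abs_mul, abs_of_pos hpow] at h2
  rw [inv_eq_one_div, le_div_iff₀ hpow]
  linarith

lemma measurable_Tb (β : ℝ) : Measurable (Tb β) :=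
  measurable_fract.comp (measurable_const_mul β)

lemma measurable_bdigit (β : ℝ) (k : ℕ) : Measurable (bdigit β k) :=
  Int.measurable_floor.comp ((measurable_const_mul β).comp ((measurable_Tb β).iterate k))

lemma measurableSet_cylinder (β : ℝ) (n : ℕ) (ε : Fin n → ℤ) :
    MeasurableSet (cylinder β n ε) := by
  have : _root_.cylinder β n ε = Set.Ico 0 1 ∩ ⋂ k : Fin n, (bdigit β k) ⁻¹' {ε k} := by
    ext x; simp [_root_.cylinder, Set.mem_iInter, Set.mem_preimage, Set.mem_Ico]
  rw [this]
  exact measurableSet_Ico.inter <| MeasurableSet.iInter fun k =>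
    (measurable_bdigit β k) (measurableSet_singleton _)

lemma cylinder_disjoint {β : ℝ} {n : ℕ} {ε ε' : Fin n → ℤ} (hne : ε ≠ ε') :
    Disjoint (cylinder β n ε) (cylinder β n ε') := by
  rw [Set.disjoint_left]
  intro x hx hx'
  exact hne (funext fun k => (hx.2 k).symm.trans (hx'.2 k))

lemma cylinder_subset_of_mem {β : ℝ} {k n : ℕ} (hkn : k ≤ n) {ε : Fin n → ℤ} {εk : Fin k → ℤ}
    {x : ℝ} (hx : x ∈ cylinder β n ε) (hxk : x ∈ cylinder β k εk) :
    cylinder β n ε ⊆ cylinder β k εk := by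
  intro y hy
  refine ⟨hy.1, fun i => ?_⟩
  have hi : (i : ℕ) < n := lt_of_lt_of_le i.2 hkn
  have h1 : bdigit β i y = ε ⟨i, hi⟩ := mem_cylinder_digits hy i hi
  have h2 : bdigit β i x = ε ⟨i, hi⟩ := mem_cylinder_digits hx i hi
  have h3 : bdigit β i x = εk i := hxk.2 i
  rw [h1, ← h2, h3]

def Spiece (β : ℝ) (ψ : ℕ → ℝ) (h : ℝ → ℝ) (n : ℕ) (ε : Fin n → ℤ) : Set ℝ :=
  {x ∈ cylinder β n ε | |(Tb β)^[n] x - h x| < ψ n}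

lemma IsFull.vol {β : ℝ} (hβ : 0 < β) {n : ℕ} {ε : Fin n → ℤ} (hf : IsFull β n ε) :
    volume (cylinder β n ε) = ENNReal.ofReal ((β ^ n)⁻¹) := by
  rw [hf.2, zpow_neg, zpow_natCast]

lemma Et_eq (β : ℝ) (ψ : ℕ → ℝ) (h : ℝ → ℝ) (n : ℕ) :
    Et β ψ h n = ⋃ ε : Fin n → ℤ, ⋃ _ : IsFull β n ε, Spiece β ψ h n ε := rfl

lemma Spiece_subset_cylinder (β : ℝ) (ψ : ℕ → ℝ) (h : ℝ → ℝ) (n : ℕ) (ε : Fin n → ℤ) :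
    Spiece β ψ h n ε ⊆ cylinder β n ε := fun _ hx => hx.1

lemma Spiece_diam {β L : ℝ} (hL : 0 ≤ L) {h : ℝ → ℝ}
    (hlip : ∀ x ∈ Set.Ico (0:ℝ) 1, ∀ y ∈ Set.Ico (0:ℝ) 1, |h x - h y| ≤ L * |x - y|)
    {ψ : ℕ → ℝ} {n : ℕ} {ε : Fin n → ℤ} {x y : ℝ}
    (hx : x ∈ Spiece β ψ h n ε) (hy : y ∈ Spiece β ψ h n ε) :
    (β ^ n - L) * |x - y| ≤ 2 * ψ n := by
  have h1 := cylinder_iter_sub hx.1 hy.1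
  have h2 := hlip x (hx.1.1) y (hy.1.1)
  have h3 : β ^ n * (x - y) = ((Tb β)^[n] x - h x) - ((Tb β)^[n] y - h y) + (h x - h y) := by
    rw [← h1]; ring
  have h4 : |β ^ n * (x - y)| ≤ ψ n + ψ n + L * |x - y| := by
    rw [h3]
    calc |((Tb β)^[n] x - h x) - ((Tb β)^[n] y - h y) + (h x - h y)|
        ≤ |((Tb β)^[n] x - h x) - ((Tb β)^[n] y - h y)| + |h x - h y| := abs_add_le _ _
      _ ≤ (|(Tb β)^[n] x - h x| + |(Tb β)^[n] y - h y|) + L * |x - y| :=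
          add_le_add (abs_sub _ _) h2
      _ ≤ ψ n + ψ n + L * |x - y| := by
          have := hx.2; have := hy.2; push_cast; linarith [hx.2.le, hy.2.le]
  rw [abs_mul] at h4
  have hb : |β ^ n| = β ^ n ∨ True := Or.inr trivial
  nlinarith [abs_nonneg (x - y), le_abs_self (β ^ n), abs_nonneg (β^n)]

lemma vol_le_of_diam {s : Set ℝ} {d : ℝ} (hd : 0 ≤ d)
    (hdiam : ∀ x ∈ s, ∀ y ∈ s, |x - y| ≤ d) : volume s ≤ ENNReal.ofReal (2 * d) := by
  rcases s.eq_empty_or_nonempty with rfl | ⟨x₀, hx₀⟩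
  · simp
  have hsub : s ⊆ Set.Icc (x₀ - d) (x₀ + d) := by
    intro x hx
    have := hdiam x hx x₀ hx₀
    rw [abs_le] at this
    exact ⟨by linarith [this.1], by linarith [this.2]⟩
  calc volume s ≤ volume (Set.Icc (x₀ - d) (x₀ + d)) := measure_mono hsub
    _ = ENNReal.ofReal (2 * d) := by rw [Real.volume_Icc]; ring_nf

lemma count_le {ι : Type*} (F : Finset ι) (A : ι → Set ℝ)
    (hmeas : ∀ i ∈ F, MeasurableSet (A i))
    (hdis : (F : Set ι).Pairwise (Function.onFun Disjoint A))
    (B : Set ℝ) (hsub : ∀ i ∈ F, A i ⊆ B)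
    (v : ℝ) (hv0 : 0 < v) (hvol : ∀ i ∈ F, ENNReal.ofReal v ≤ volume (A i))
    (V : ℝ) (hV0 : 0 ≤ V) (hV : volume B ≤ ENNReal.ofReal V) :
    (F.card : ℝ) * v ≤ V := by
  have key : ENNReal.ofReal ((F.card : ℝ) * v) ≤ ENNReal.ofReal V := by
    rw [ENNReal.ofReal_mul (Nat.cast_nonneg _)]
    calc ENNReal.ofReal (F.card : ℝ) * ENNReal.ofReal v
        = (F.card : ℝ≥0∞) * ENNReal.ofReal v := by rw [ENNReal.ofReal_natCast]
      _ = ∑ i ∈ F, ENNReal.ofReal v := by rw [Finset.sum_const, nsmul_eq_mul]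
      _ ≤ ∑ i ∈ F, volume (A i) := Finset.sum_le_sum hvol
      _ = volume (⋃ i ∈ F, A i) := (measure_biUnion_finset hdis hmeas).symm
      _ ≤ volume B := measure_mono (Set.iUnion₂_subset hsub)
      _ ≤ ENNReal.ofReal V := hV
  exact (ENNReal.ofReal_le_ofReal_iff hV0).mp key

lemma finite_count {ι : Type*} (T : Set ι) (A : ι → Set ℝ)
    (hmeas : ∀ i ∈ T, MeasurableSet (A i))
    (hdis : T.Pairwise (Function.onFun Disjoint A))
    (B : Set ℝ) (hsub : ∀ i ∈ T, A i ⊆ B)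
    (v : ℝ) (hv0 : 0 < v) (hvol : ∀ i ∈ T, ENNReal.ofReal v ≤ volume (A i))
    (V : ℝ) (hV0 : 0 ≤ V) (hV : volume B ≤ ENNReal.ofReal V) :
    T.Finite ∧ ∀ hT : T.Finite, (hT.toFinset.card : ℝ) * v ≤ V := by
  have hfin : T.Finite := by
    by_contra hinf
    obtain ⟨F, hFsub, hFcard⟩ := Set.Infinite.exists_subset_card_eq hinf (⌊V / v⌋₊ + 1)
    have h1 : (F.card : ℝ) * v ≤ V :=
      count_le F A (fun i hi => hmeas i (hFsub hi)) (hdis.mono hFsub) B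
        (fun i hi => hsub i (hFsub hi)) v hv0 (fun i hi => hvol i (hFsub hi)) V hV0 hV
    rw [hFcard] at h1
    have h2 : V / v < (⌊V / v⌋₊ + 1 : ℕ) := by
      push_cast
      exact Nat.lt_floor_add_one _
    rw [div_lt_iff₀ hv0] at h2
    linarith
  refine ⟨hfin, fun hT => ?_⟩
  exact count_le hT.toFinset A (fun i hi => hmeas i (hT.mem_toFinset.mp hi))
    (by intro a ha b hb; exact hdis (hT.mem_toFinset.mp ha) (hT.mem_toFinset.mp hb)) B
    (fun i hi => hsub i (hT.mem_toFinset.mp hi)) v hv0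
    (fun i hi => hvol i (hT.mem_toFinset.mp hi)) V hV0 hV

lemma interval_Et (β L μ : ℝ) (hβ : 1 < β) (hL : 0 ≤ L)
    (h : ℝ → ℝ)
    (hlip : ∀ x ∈ Set.Ico (0:ℝ) 1, ∀ y ∈ Set.Ico (0:ℝ) 1, |h x - h y| ≤ L * |x - y|)
    (ψ : ℕ → ℝ) (hψ : ∀ n, 0 < ψ n) (m : ℕ)
    (hμ : 0 < μ) (hgap : μ * β ^ m ≤ β ^ m - L)
    (a b : ℝ) (hab : a ≤ b) :
    volume (Set.Icc a b ∩ Et β ψ h m) ≤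
      ENNReal.ofReal ((4 / μ) * ψ m * (b - a + 2 * (β ^ m)⁻¹)) := by
  classical
  have hβ0 : (0:ℝ) < β := lt_trans one_pos hβ
  have hpow : (0:ℝ) < β ^ m := pow_pos hβ0 m
  have hgap0 : 0 < β ^ m - L := lt_of_lt_of_le (mul_pos hμ hpow) hgap
  set d : ℝ := 2 * ψ m / (μ * β ^ m) with hd
  have hd0 : 0 < d := div_pos (by linarith [hψ m]) (mul_pos hμ hpow)
  have hdiam : ∀ ε : Fin m → ℤ, ∀ x ∈ Spiece β ψ h m ε, ∀ y ∈ Spiece β ψ h m ε,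
      |x - y| ≤ d := by
    intro ε x hx y hy
    have h1 := Spiece_diam hL hlip hx hy
    have h2 : (μ * β ^ m) * |x - y| ≤ 2 * ψ m :=
      le_trans (mul_le_mul_of_nonneg_right hgap (abs_nonneg _)) h1
    rw [hd, le_div_iff₀ (mul_pos hμ hpow)]
    linarith [h2]
  have hvolS : ∀ ε : Fin m → ℤ, volume (Spiece β ψ h m ε) ≤ ENNReal.ofReal (2 * d) :=
    fun ε => vol_le_of_diam hd0.le (hdiam ε)
  set G : (Fin m → ℤ) → Set ℝ :=
    fun ε => Set.Icc a b ∩ ⋃ _ : IsFull β m ε, Spiece β ψ h m ε with hG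
  have hGS : ∀ ε, G ε ⊆ Spiece β ψ h m ε := by
    intro ε x hx
    obtain ⟨-, hx2⟩ := hx
    simpa using Set.mem_iUnion.mp hx2 |>.2
  have hcover : Set.Icc a b ∩ Et β ψ h m = ⋃ ε, G ε := by
    rw [Et_eq, Set.inter_iUnion]
  set T : Set (Fin m → ℤ) := {ε | IsFull β m ε ∧ (G ε).Nonempty} with hT
  have hVnn : (0:ℝ) ≤ b - a + 2 * (β ^ m)⁻¹ := by
    have : (0:ℝ) < (β ^ m)⁻¹ := by positivity
    linarith
  obtain ⟨hTfin, hcard⟩ := finite_count T (fun ε => cylinder β m ε)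
    (fun ε _ => measurableSet_cylinder β m ε)
    (fun ε _ ε' _ hne => cylinder_disjoint hne)
    (Set.Icc (a - (β ^ m)⁻¹) (b + (β ^ m)⁻¹))
    (by
      rintro ε ⟨hfull, x₁, hx₁⟩
      have hx₁S : x₁ ∈ Spiece β ψ h m ε := hGS ε hx₁
      have hx₁I : x₁ ∈ Set.Icc a b := hx₁.1
      intro x hx
      have := cylinder_diam hβ hx hx₁S.1
      rw [abs_le] at this
      exact ⟨by linarith [hx₁I.1, this.1], by linarith [hx₁I.2, this.2]⟩)
    ((β ^ m)⁻¹) (by positivity)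
    (fun ε hε => le_of_eq (hε.1.vol hβ0).symm)
    (b - a + 2 * (β ^ m)⁻¹) hVnn
    (by rw [Real.volume_Icc]; exact ENNReal.ofReal_le_ofReal (by ring_nf; rfl))
  have hcardR := hcard hTfin
  calc volume (Set.Icc a b ∩ Et β ψ h m) = volume (⋃ ε, G ε) := by rw [hcover]
    _ ≤ ∑' ε, volume (G ε) := measure_iUnion_le _
    _ = ∑ ε ∈ hTfin.toFinset, volume (G ε) := by
        refine tsum_eq_sum (fun ε hε => ?_)
        rw [Set.Finite.mem_toFinset] at hε
        by_cases hfull : IsFull β m ε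
        · have : G ε = ∅ := by
            by_contra hne
            exact hε ⟨hfull, Set.nonempty_iff_ne_empty.mpr hne⟩
          rw [this, measure_empty]
        · have : G ε = ∅ := by
            rw [hG]
            simp [Set.iUnion_eq_empty, hfull]
          rw [this, measure_empty]
    _ ≤ ∑ ε ∈ hTfin.toFinset, ENNReal.ofReal (2 * d) :=
        Finset.sum_le_sum fun ε _ => le_trans (measure_mono (hGS ε)) (hvolS ε)
    _ = (hTfin.toFinset.card : ℝ≥0∞) * ENNReal.ofReal (2 * d) := by
        rw [Finset.sum_const, nsmul_eq_mul]
    _ ≤ ENNReal.ofReal ((4 / μ) * ψ m * (b - a + 2 * (β ^ m)⁻¹)) := by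
        rw [← ENNReal.ofReal_natCast, ← ENNReal.ofReal_mul (Nat.cast_nonneg _)]
        refine ENNReal.ofReal_le_ofReal ?_
        have h1 : (hTfin.toFinset.card : ℝ) ≤ (b - a + 2 * (β ^ m)⁻¹) * β ^ m := by
          rw [← le_div_iff₀ hpow] at *
          calc (hTfin.toFinset.card : ℝ)
              = (hTfin.toFinset.card : ℝ) * (β ^ m)⁻¹ * β ^ m := by field_simp
            _ ≤ (b - a + 2 * (β ^ m)⁻¹) * β ^ m :=
                mul_le_mul_of_nonneg_right hcardR hpow.le
        calc (hTfin.toFinset.card : ℝ) * (2 * d)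
            ≤ ((b - a + 2 * (β ^ m)⁻¹) * β ^ m) * (2 * d) :=
              mul_le_mul_of_nonneg_right h1 (by positivity)
          _ = (4 / μ) * ψ m * (b - a + 2 * (β ^ m)⁻¹) := by
              rw [hd]; field_simp; ring

lemma pair_Et (β L μ : ℝ) (hβ : 1 < β) (hL : 0 ≤ L)
    (h : ℝ → ℝ)
    (hlip : ∀ x ∈ Set.Ico (0:ℝ) 1, ∀ y ∈ Set.Ico (0:ℝ) 1, |h x - h y| ≤ L * |x - y|)
    (ψ : ℕ → ℝ) (hψ : ∀ n, 0 < ψ n)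
    (k n m : ℕ) (εk : Fin k → ℤ) (hfullk : IsFull β k εk)
    (hkn : k ≤ n) (hnm : n ≤ m) (hμ : 0 < μ)
    (hgapn : μ * β ^ n ≤ β ^ n - L) (hgapm : μ * β ^ m ≤ β ^ m - L) :
    volume (cylinder β k εk ∩ Et β ψ h n ∩ Et β ψ h m) ≤
      ENNReal.ofReal ((β ^ k)⁻¹ *
        ((16 / μ ^ 2) * (ψ n * ψ m) + (8 / μ) * ψ m * (β ^ (m - n))⁻¹)) := by
  classical
  have hβ0 : (0:ℝ) < β := lt_trans one_pos hβ
  have hpn : (0:ℝ) < β ^ n := pow_pos hβ0 n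
  have hpm : (0:ℝ) < β ^ m := pow_pos hβ0 m
  have hpk : (0:ℝ) < β ^ k := pow_pos hβ0 k
  have hpmn : (0:ℝ) < β ^ (m - n) := pow_pos hβ0 _
  set d : ℝ := 2 * ψ n / (μ * β ^ n) with hd
  have hd0 : 0 < d := div_pos (by linarith [hψ n]) (mul_pos hμ hpn)
  have hdiam : ∀ ε : Fin n → ℤ, ∀ x ∈ Spiece β ψ h n ε, ∀ y ∈ Spiece β ψ h n ε,
      |x - y| ≤ d := by
    intro ε x hx y hy
    have h1 := Spiece_diam hL hlip hx hy
    have h2 : (μ * β ^ n) * |x - y| ≤ 2 * ψ n :=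
      le_trans (mul_le_mul_of_nonneg_right hgapn (abs_nonneg _)) h1
    rw [hd, le_div_iff₀ (mul_pos hμ hpn)]
    linarith [h2]
  set X : Set ℝ := cylinder β k εk with hX
  set G : (Fin n → ℤ) → Set ℝ :=
    fun ε => (X ∩ ⋃ _ : IsFull β n ε, Spiece β ψ h n ε) ∩ Et β ψ h m with hG
  have hGS : ∀ ε, G ε ⊆ Spiece β ψ h n ε := by
    intro ε x hx
    obtain ⟨⟨-, hx2⟩, -⟩ := hx
    simpa using Set.mem_iUnion.mp hx2 |>.2
  have hcover : X ∩ Et β ψ h n ∩ Et β ψ h m = ⋃ ε, G ε := by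
    rw [Et_eq β ψ h n, Set.inter_iUnion, Set.iUnion_inter]
  set T : Set (Fin n → ℤ) := {ε | IsFull β n ε ∧ (G ε).Nonempty} with hT
  obtain ⟨hTfin, hcard⟩ := finite_count T (fun ε => cylinder β n ε)
    (fun ε _ => measurableSet_cylinder β n ε)
    (fun ε _ ε' _ hne => cylinder_disjoint hne)
    X
    (by
      rintro ε ⟨hfull, x₁, hx₁⟩
      have hx₁S : x₁ ∈ Spiece β ψ h n ε := hGS ε hx₁
      have hx₁X : x₁ ∈ X := hx₁.1.1
      exact cylinder_subset_of_mem hkn hx₁S.1 hx₁X)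
    ((β ^ n)⁻¹) (by positivity)
    (fun ε hε => le_of_eq (hε.1.vol hβ0).symm)
    ((β ^ k)⁻¹) (by positivity)
    (le_of_eq (hfullk.vol hβ0))
  have hcardR := hcard hTfin
  have hc2nn : (0:ℝ) ≤ (4 / μ) * ψ m * (2 * d + 2 * (β ^ m)⁻¹) := by
    have := (hψ m).le
    have h2 : (0:ℝ) ≤ 2 * d + 2 * (β ^ m)⁻¹ := by positivity
    positivity
  calc volume (cylinder β k εk ∩ Et β ψ h n ∩ Et β ψ h m) = volume (⋃ ε, G ε) := by
        rw [← hcover]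
    _ ≤ ∑' ε, volume (G ε) := measure_iUnion_le _
    _ = ∑ ε ∈ hTfin.toFinset, volume (G ε) := by
        refine tsum_eq_sum (fun ε hε => ?_)
        rw [Set.Finite.mem_toFinset] at hε
        by_cases hfull : IsFull β n ε
        · have : G ε = ∅ := by
            by_contra hne
            exact hε ⟨hfull, Set.nonempty_iff_ne_empty.mpr hne⟩
          rw [this, measure_empty]
        · have : G ε = ∅ := by
            rw [hG]
            simp [Set.iUnion_eq_empty, hfull]
          rw [this, measure_empty]
    _ ≤ ∑ ε ∈ hTfin.toFinset,
          ENNReal.ofReal ((4 / μ) * ψ m * (2 * d + 2 * (β ^ m)⁻¹)) := by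
        refine Finset.sum_le_sum (fun ε hε => ?_)
        rw [Set.Finite.mem_toFinset] at hε
        obtain ⟨hfull, x₁, hx₁⟩ := hε
        have hx₁S : x₁ ∈ Spiece β ψ h n ε := hGS ε hx₁
        have hsub : G ε ⊆ Set.Icc (x₁ - d) (x₁ + d) ∩ Et β ψ h m := by
          intro x hx
          refine ⟨?_, hx.2⟩
          have := hdiam ε x (hGS ε hx) x₁ hx₁S
          rw [abs_le] at this
          exact ⟨by linarith [this.1], by linarith [this.2]⟩
        calc volume (G ε) ≤ volume (Set.Icc (x₁ - d) (x₁ + d) ∩ Et β ψ h m) :=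
              measure_mono hsub
          _ ≤ ENNReal.ofReal ((4 / μ) * ψ m * (x₁ + d - (x₁ - d) + 2 * (β ^ m)⁻¹)) :=
              interval_Et β L μ hβ hL h hlip ψ hψ m hμ hgapm (x₁ - d) (x₁ + d)
                (by linarith [hd0])
          _ = ENNReal.ofReal ((4 / μ) * ψ m * (2 * d + 2 * (β ^ m)⁻¹)) := by
              congr 1; ring
    _ = (hTfin.toFinset.card : ℝ≥0∞) *
          ENNReal.ofReal ((4 / μ) * ψ m * (2 * d + 2 * (β ^ m)⁻¹)) := by
        rw [Finset.sum_const, nsmul_eq_mul]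
    _ ≤ ENNReal.ofReal ((β ^ k)⁻¹ *
        ((16 / μ ^ 2) * (ψ n * ψ m) + (8 / μ) * ψ m * (β ^ (m - n))⁻¹)) := by
        rw [← ENNReal.ofReal_natCast, ← ENNReal.ofReal_mul (Nat.cast_nonneg _)]
        refine ENNReal.ofReal_le_ofReal ?_
        have h1 : (hTfin.toFinset.card : ℝ) ≤ (β ^ k)⁻¹ * β ^ n := by
          calc (hTfin.toFinset.card : ℝ)
              = (hTfin.toFinset.card : ℝ) * (β ^ n)⁻¹ * β ^ n := by field_simp
            _ ≤ (β ^ k)⁻¹ * β ^ n := mul_le_mul_of_nonneg_right hcardR hpn.le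
        have hmsplit : (β ^ m)⁻¹ = (β ^ (m - n))⁻¹ * (β ^ n)⁻¹ := by
          rw [← mul_inv, ← pow_add]
          congr 2
          omega
        calc (hTfin.toFinset.card : ℝ) * ((4 / μ) * ψ m * (2 * d + 2 * (β ^ m)⁻¹))
            ≤ ((β ^ k)⁻¹ * β ^ n) * ((4 / μ) * ψ m * (2 * d + 2 * (β ^ m)⁻¹)) :=
              mul_le_mul_of_nonneg_right h1 hc2nn
          _ = (β ^ k)⁻¹ *
              ((16 / μ ^ 2) * (ψ n * ψ m) + (8 / μ) * ψ m * (β ^ (m - n))⁻¹) := by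
              rw [hmsplit, hd]
              field_simp
              ring

lemma geomSumLe (r : ℝ) (h0 : 0 ≤ r) (h1 : r < 1) (t : ℕ) :
    ∑ j ∈ Finset.range t, r ^ j ≤ (1 - r)⁻¹ := by
  have hne : r ≠ 1 := ne_of_lt h1
  rw [geom_sum_eq hne]
  rw [div_le_iff_of_neg (by linarith : r - 1 < 0)]
  have h2 : (1 - r)⁻¹ * (r - 1) = -1 := by
    have : (1:ℝ) - r ≠ 0 := by linarith
    field_simp
    ring
  rw [h2]
  linarith [pow_nonneg h0 t]

lemma inner_geom {β : ℝ} (hβ : 1 < β) (m : ℕ) (I : Finset ℕ) :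
    ∑ n ∈ I, (if n ≤ m then (β⁻¹) ^ (m - n) else 0) ≤ (1 - β⁻¹)⁻¹ := by
  have hβ0 : (0:ℝ) < β := lt_trans one_pos hβ
  have h0 : (0:ℝ) ≤ β⁻¹ := by positivity
  have h1 : β⁻¹ < 1 := by
    rw [inv_lt_one_iff₀]; right; exact hβ
  calc ∑ n ∈ I, (if n ≤ m then (β⁻¹) ^ (m - n) else 0)
      = ∑ n ∈ I.filter (· ≤ m), (β⁻¹) ^ (m - n) := (Finset.sum_filter _ _).symm
    _ ≤ ∑ n ∈ Finset.range (m + 1), (β⁻¹) ^ (m - n) := by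
        refine Finset.sum_le_sum_of_subset_of_nonneg ?_ (fun i _ _ => by positivity)
        intro x hx
        rw [Finset.mem_filter] at hx
        rw [Finset.mem_range]
        omega
    _ = ∑ j ∈ Finset.range (m + 1), (β⁻¹) ^ j := Finset.sum_range_reflect _ _
    _ ≤ (1 - β⁻¹)⁻¹ := geomSumLe _ h0 h1 _

set_option maxHeartbeats 1600000 in
/-- Correlation estimate (Lemma 5.4): for any full word ε_k and M > N ≥ k (with β^N > L),
∑_{n,m=N}^M λ(I_{k,β}(ε_k) ∩ Ẽ_m ∩ Ẽ_n) ≤ C |I_{k,β}(ε_k)| ((∑ψ)² + ∑ψ),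
where |I_{k,β}(ε_k)| = β^{-k} and C does not depend on ε_k, N, M. -/
theorem stmt18 (β L : ℝ) (hβ : 1 < β) (hL : 0 ≤ L)
    (h : ℝ → ℝ) (hmap : ∀ x ∈ Set.Ico (0:ℝ) 1, h x ∈ Set.Icc (0:ℝ) 1)
    (hlip : ∀ x ∈ Set.Ico (0:ℝ) 1, ∀ y ∈ Set.Ico (0:ℝ) 1, |h x - h y| ≤ L * |x - y|)
    (ψ : ℕ → ℝ) (hψ : ∀ n, 0 < ψ n) :
    ∃ C : ℝ, 0 < C ∧ ∀ (k : ℕ) (εk : Fin k → ℤ), IsFull β k εk →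
      ∀ N M : ℕ, k ≤ N → N < M → L < β ^ N →
      ∑ n ∈ Finset.Icc N M, ∑ m ∈ Finset.Icc N M,
          volume (cylinder β k εk ∩ Et β ψ h m ∩ Et β ψ h n) ≤
        ENNReal.ofReal (C * β ^ (-(k:ℤ)) *
          ((∑ n ∈ Finset.Icc N M, ψ n) ^ 2 + ∑ n ∈ Finset.Icc N M, ψ n)) := by
  classical
  have hβ0 : (0:ℝ) < β := lt_trans one_pos hβ
  have hex : ∃ n : ℕ, L < β ^ n := pow_unbounded_of_one_lt L hβ
  set N₀ := Nat.find hex with hN₀def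
  have hN₀ : L < β ^ N₀ := Nat.find_spec hex
  have hpN₀ : (0:ℝ) < β ^ N₀ := pow_pos hβ0 N₀
  set μ : ℝ := 1 - L / β ^ N₀ with hμdef
  have hμ : 0 < μ := by
    have : L / β ^ N₀ < 1 := (div_lt_one hpN₀).mpr hN₀
    simp only [hμdef]; linarith
  set K : ℝ := (1 - β⁻¹)⁻¹ with hKdef
  have hβinv1 : β⁻¹ < 1 := by rw [inv_lt_one_iff₀]; right; exact hβ
  have hK0 : 0 < K := by
    rw [hKdef]; exact inv_pos.mpr (by linarith)
  set Bc : ℝ := 16 / μ ^ 2 + 8 / μ with hBcdef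
  have hBc0 : 0 < Bc := by
    rw [hBcdef]
    exact add_pos (div_pos (by norm_num) (pow_pos hμ 2)) (div_pos (by norm_num) hμ)
  refine ⟨Bc * (1 + 2 * K), by nlinarith, ?_⟩
  intro k εk hfullk N M hkN hNM hLN
  set I := Finset.Icc N M with hI
  have hpk : (0:ℝ) < β ^ k := pow_pos hβ0 k
  have hN₀N : N₀ ≤ N := Nat.find_min' hex hLN
  have hgap : ∀ n, N ≤ n → μ * β ^ n ≤ β ^ n - L := by
    intro n hn
    have hpn : (0:ℝ) < β ^ n := pow_pos hβ0 n
    have h1 : β ^ N₀ ≤ β ^ n := pow_le_pow_right₀ hβ.le (le_trans hN₀N hn)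
    have h3 : (1:ℝ) ≤ β ^ n / β ^ N₀ := (one_le_div hpN₀).mpr h1
    have h2 : L ≤ L * (β ^ n / β ^ N₀) := by nlinarith
    have h4 : μ * β ^ n = β ^ n - L * (β ^ n / β ^ N₀) := by
      rw [hμdef]; field_simp
    rw [h4]; linarith
  set g : ℕ → ℕ → ℝ := fun n m => ψ n * ψ m +
    (if n ≤ m then ψ m * (β⁻¹) ^ (m - n) else ψ n * (β⁻¹) ^ (n - m)) with hg
  have hgnn : ∀ n m, 0 ≤ g n m := by
    intro n m
    simp only [hg]
    have := (hψ n).le; have := (hψ m).le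
    have h1 : (0:ℝ) ≤ (β⁻¹ : ℝ) := by positivity
    split_ifs <;> positivity
  have hterm : ∀ n ∈ I, ∀ m ∈ I,
      volume (cylinder β k εk ∩ Et β ψ h m ∩ Et β ψ h n) ≤
        ENNReal.ofReal ((β ^ k)⁻¹ * Bc * g n m) := by
    intro n hn m hm
    rw [hI, Finset.mem_Icc] at hn hm
    have hkn : k ≤ n := le_trans hkN hn.1
    have hkm : k ≤ m := le_trans hkN hm.1
    have hψn := (hψ n).le; have hψm := (hψ m).le
    by_cases hc : n ≤ m
    · have heq : cylinder β k εk ∩ Et β ψ h m ∩ Et β ψ h n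
          = cylinder β k εk ∩ Et β ψ h n ∩ Et β ψ h m := Set.inter_right_comm _ _ _
      rw [heq]
      refine le_trans (pair_Et β L μ hβ hL h hlip ψ hψ k n m εk hfullk hkn hc hμ
        (hgap n hn.1) (hgap m hm.1)) (ENNReal.ofReal_le_ofReal ?_)
      simp only [hg, if_pos hc]
      have hinv : ((β : ℝ) ^ (m - n))⁻¹ = (β⁻¹) ^ (m - n) := (inv_pow β (m - n)).symm
      rw [hinv, hBcdef]
      have h1 : (0:ℝ) ≤ (β⁻¹ : ℝ) ^ (m - n) := by positivity
      have h2 : (0:ℝ) < (β ^ k)⁻¹ := by positivity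
      have h5 : (0:ℝ) < 16 / μ ^ 2 := div_pos (by norm_num) (pow_pos hμ 2)
      have h6 : (0:ℝ) < 8 / μ := div_pos (by norm_num) hμ
      have key : 16 / μ ^ 2 * (ψ n * ψ m) + 8 / μ * ψ m * (β⁻¹) ^ (m - n)
          ≤ (16 / μ ^ 2 + 8 / μ) * (ψ n * ψ m + ψ m * (β⁻¹) ^ (m - n)) := by
        nlinarith [mul_nonneg h5.le (mul_nonneg hψm h1), mul_nonneg h6.le (mul_nonneg hψn hψm)]
      calc (β ^ k)⁻¹ * (16 / μ ^ 2 * (ψ n * ψ m) + 8 / μ * ψ m * (β⁻¹) ^ (m - n))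
          ≤ (β ^ k)⁻¹ * ((16 / μ ^ 2 + 8 / μ) * (ψ n * ψ m + ψ m * (β⁻¹) ^ (m - n))) :=
            mul_le_mul_of_nonneg_left key h2.le
        _ = (β ^ k)⁻¹ * (16 / μ ^ 2 + 8 / μ) * (ψ n * ψ m + ψ m * (β⁻¹) ^ (m - n)) := by
            ring
    · push_neg at hc
      refine le_trans (pair_Et β L μ hβ hL h hlip ψ hψ k m n εk hfullk hkm hc.le hμ
        (hgap m hm.1) (hgap n hn.1)) (ENNReal.ofReal_le_ofReal ?_)
      simp only [hg, if_neg (not_le.mpr hc)]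
      have hinv : ((β : ℝ) ^ (n - m))⁻¹ = (β⁻¹) ^ (n - m) := (inv_pow β (n - m)).symm
      rw [hinv, hBcdef]
      have h1 : (0:ℝ) ≤ (β⁻¹ : ℝ) ^ (n - m) := by positivity
      have h2 : (0:ℝ) < (β ^ k)⁻¹ := by positivity
      have h5 : (0:ℝ) < 16 / μ ^ 2 := div_pos (by norm_num) (pow_pos hμ 2)
      have h6 : (0:ℝ) < 8 / μ := div_pos (by norm_num) hμ
      have key : 16 / μ ^ 2 * (ψ m * ψ n) + 8 / μ * ψ n * (β⁻¹) ^ (n - m)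
          ≤ (16 / μ ^ 2 + 8 / μ) * (ψ n * ψ m + ψ n * (β⁻¹) ^ (n - m)) := by
        nlinarith [mul_nonneg h5.le (mul_nonneg hψn h1), mul_nonneg h6.le (mul_nonneg hψn hψm)]
      calc (β ^ k)⁻¹ * (16 / μ ^ 2 * (ψ m * ψ n) + 8 / μ * ψ n * (β⁻¹) ^ (n - m))
          ≤ (β ^ k)⁻¹ * ((16 / μ ^ 2 + 8 / μ) * (ψ n * ψ m + ψ n * (β⁻¹) ^ (n - m))) :=
            mul_le_mul_of_nonneg_left key h2.le
        _ = (β ^ k)⁻¹ * (16 / μ ^ 2 + 8 / μ) * (ψ n * ψ m + ψ n * (β⁻¹) ^ (n - m)) := by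
            ring
  set S : ℝ := ∑ n ∈ I, ψ n with hS
  have hS0 : 0 ≤ S := Finset.sum_nonneg fun n _ => (hψ n).le
  have hsum_g : ∑ n ∈ I, ∑ m ∈ I, g n m ≤ S ^ 2 + 2 * K * S := by
    have hsq : ∑ n ∈ I, ∑ m ∈ I, ψ n * ψ m = S ^ 2 := by
      rw [hS, sq, Finset.sum_mul_sum]
    have hsplit : ∑ n ∈ I, ∑ m ∈ I, g n m
        = S ^ 2 + ∑ n ∈ I, ∑ m ∈ I,
            (if n ≤ m then ψ m * (β⁻¹) ^ (m - n) else ψ n * (β⁻¹) ^ (n - m)) := by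
      rw [← hsq, ← Finset.sum_add_distrib]
      refine Finset.sum_congr rfl fun n _ => ?_
      rw [← Finset.sum_add_distrib]
    rw [hsplit]
    have hS2 : ∑ n ∈ I, ∑ m ∈ I,
        (if n ≤ m then ψ m * (β⁻¹) ^ (m - n) else ψ n * (β⁻¹) ^ (n - m))
        ≤ 2 * K * S := by
      have hle : ∀ n m : ℕ, (if n ≤ m then ψ m * (β⁻¹) ^ (m - n) else ψ n * (β⁻¹) ^ (n - m))
          ≤ (if n ≤ m then ψ m * (β⁻¹) ^ (m - n) else 0)
            + (if m ≤ n then ψ n * (β⁻¹) ^ (n - m) else 0) := by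
        intro n m
        have h1 : (0:ℝ) ≤ ψ m * (β⁻¹) ^ (m - n) := by
          have := (hψ m).le; positivity
        have h2 : (0:ℝ) ≤ ψ n * (β⁻¹) ^ (n - m) := by
          have := (hψ n).le; positivity
        split_ifs <;> simp_all <;> linarith
      calc ∑ n ∈ I, ∑ m ∈ I,
            (if n ≤ m then ψ m * (β⁻¹) ^ (m - n) else ψ n * (β⁻¹) ^ (n - m))
          ≤ ∑ n ∈ I, ∑ m ∈ I, ((if n ≤ m then ψ m * (β⁻¹) ^ (m - n) else 0)
            + (if m ≤ n then ψ n * (β⁻¹) ^ (n - m) else 0)) :=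
            Finset.sum_le_sum fun n _ => Finset.sum_le_sum fun m _ => hle n m
        _ = (∑ n ∈ I, ∑ m ∈ I, (if n ≤ m then ψ m * (β⁻¹) ^ (m - n) else 0))
            + ∑ n ∈ I, ∑ m ∈ I, (if m ≤ n then ψ n * (β⁻¹) ^ (n - m) else 0) := by
            rw [← Finset.sum_add_distrib]
            refine Finset.sum_congr rfl fun n _ => ?_
            rw [← Finset.sum_add_distrib]
        _ ≤ K * S + K * S := by
            refine add_le_add ?_ ?_
            · rw [Finset.sum_comm]
              calc ∑ m ∈ I, ∑ n ∈ I, (if n ≤ m then ψ m * (β⁻¹) ^ (m - n) else 0)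
                  = ∑ m ∈ I, ψ m * ∑ n ∈ I, (if n ≤ m then (β⁻¹) ^ (m - n) else 0) := by
                    refine Finset.sum_congr rfl fun m _ => ?_
                    rw [Finset.mul_sum]
                    refine Finset.sum_congr rfl fun n _ => ?_
                    split_ifs <;> simp
                _ ≤ ∑ m ∈ I, ψ m * K := Finset.sum_le_sum fun m _ =>
                    mul_le_mul_of_nonneg_left (inner_geom hβ m I) (hψ m).le
                _ = K * S := by rw [hS, ← Finset.sum_mul, mul_comm]
            · calc ∑ n ∈ I, ∑ m ∈ I, (if m ≤ n then ψ n * (β⁻¹) ^ (n - m) else 0)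
                  = ∑ n ∈ I, ψ n * ∑ m ∈ I, (if m ≤ n then (β⁻¹) ^ (n - m) else 0) := by
                    refine Finset.sum_congr rfl fun n _ => ?_
                    rw [Finset.mul_sum]
                    refine Finset.sum_congr rfl fun m _ => ?_
                    split_ifs <;> simp
                _ ≤ ∑ n ∈ I, ψ n * K := Finset.sum_le_sum fun n _ =>
                    mul_le_mul_of_nonneg_left (inner_geom hβ n I) (hψ n).le
                _ = K * S := by rw [hS, ← Finset.sum_mul, mul_comm]
        _ = 2 * K * S := by ring
    linarith
  have hnn : ∀ n m : ℕ, (0:ℝ) ≤ (β ^ k)⁻¹ * Bc * g n m :=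
    fun n m => mul_nonneg (mul_nonneg (by positivity) hBc0.le) (hgnn n m)
  calc ∑ n ∈ I, ∑ m ∈ I, volume (cylinder β k εk ∩ Et β ψ h m ∩ Et β ψ h n)
      ≤ ∑ n ∈ I, ∑ m ∈ I, ENNReal.ofReal ((β ^ k)⁻¹ * Bc * g n m) :=
        Finset.sum_le_sum fun n hn => Finset.sum_le_sum fun m hm => hterm n hn m hm
    _ = ENNReal.ofReal (∑ n ∈ I, ∑ m ∈ I, (β ^ k)⁻¹ * Bc * g n m) := by
        rw [ENNReal.ofReal_sum_of_nonneg
          (fun n _ => Finset.sum_nonneg fun m _ => hnn n m)]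
        exact Finset.sum_congr rfl fun n _ =>
          (ENNReal.ofReal_sum_of_nonneg (fun m _ => hnn n m)).symm
    _ ≤ ENNReal.ofReal (Bc * (1 + 2 * K) * β ^ (-(k:ℤ)) * (S ^ 2 + S)) := by
        refine ENNReal.ofReal_le_ofReal ?_
        have hzp : (β:ℝ) ^ (-(k:ℤ)) = (β ^ k)⁻¹ := by rw [zpow_neg, zpow_natCast]
        rw [hzp]
        have h1 : ∑ n ∈ I, ∑ m ∈ I, (β ^ k)⁻¹ * Bc * g n m
            = (β ^ k)⁻¹ * Bc * ∑ n ∈ I, ∑ m ∈ I, g n m := by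
          rw [Finset.mul_sum]
          exact Finset.sum_congr rfl fun n _ => by rw [Finset.mul_sum]
        rw [h1]
        have hc0 : (0:ℝ) ≤ (β ^ k)⁻¹ * Bc := mul_nonneg (by positivity) hBc0.le
        have h3 : S ^ 2 + 2 * K * S ≤ (1 + 2 * K) * (S ^ 2 + S) := by
          nlinarith [mul_nonneg hK0.le (sq_nonneg S), hS0]
        calc (β ^ k)⁻¹ * Bc * (∑ n ∈ I, ∑ m ∈ I, g n m)
            ≤ (β ^ k)⁻¹ * Bc * (S ^ 2 + 2 * K * S) :=
              mul_le_mul_of_nonneg_left hsum_g hc0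
          _ ≤ (β ^ k)⁻¹ * Bc * ((1 + 2 * K) * (S ^ 2 + S)) :=
              mul_le_mul_of_nonneg_left h3 hc0
          _ = Bc * (1 + 2 * K) * (β ^ k)⁻¹ * (S ^ 2 + S) := by ring
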